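/- Counting coprime factorizations with coprimality constraints: Suppose V_{1,3}, V_{2,3}, V_{3,1}, V_{3,2} ∈ ℳ satisfy gcd(V_{1,3}, V_{3,1}V_{3,2}) = 1 and gcd(V_{2,3}, V_{3,1}V_{3,2}) = 1. Then the set {(V_{1,2}, V_{2,1}) ∈ ℳ² : gcd(V_{1,2}, V_{2,3}V_{3,1}) = 1, gcd(V_{2,1}, V_{1,3}V_{3,2}) = 1, gcd(V_{1,2}, V_{2,1}) = 1} is the disjoint union, over V ∈ ℳ with gcd(V, gcd(V_{1,3}V_{3,1}, V_{2,3}V_{3,2})) = 1, of its subsets with V_{1,2}V_{2,1} = V; and for each such V the number of pairs (V_{1,2}, V_{2,1}) ∈ ℳ² with V_{1,2}V_{2,1} = V, gcd(V_{1,2}, V_{2,3}V_{3,1}) = 1, gcd(V_{2,1}, V_{1,3}V_{3,2}) = 1 and gcd(V_{1,2}, V_{2,1}) = 1 equals 2^{ω(V) − ω(gcd(V, V_{1,3}V_{2,3}V_{3,1}V_{3,2}))}. -/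

import Mathlib

open scoped BigOperators
open Filter

noncomputable section

namespace FFEH

variable {Fq : Type} [Field Fq] [Fintype Fq]

open Classical in
/-- The absolute value `|A| = q ^ deg A` of a polynomial `A ∈ 𝔽_q[T]`, with `|0| = 0`. -/
def absP (A : Polynomial Fq) : ℝ :=
  if A = 0 then 0 else (Fintype.card Fq : ℝ) ^ A.natDegree

/-- Monic irreducible ("prime") polynomials. -/
def IsMonicPrime (P : Polynomial Fq) : Prop := P.Monic ∧ Irreducible P

/-- A Dirichlet character of modulus `R` on `𝔽_q[T]`. -/
structure IsDirichletChar (R : Polynomial Fq) (χ : Polynomial Fq → ℂ) : Prop where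
  map_one' : χ 1 = 1
  map_mul' : ∀ A B : Polynomial Fq, χ (A * B) = χ A * χ B
  congr' : ∀ A B : Polynomial Fq, R ∣ A - B → χ A = χ B
  eq_zero_iff' : ∀ A : Polynomial Fq, χ A = 0 ↔ ¬ IsCoprime A R

/-- A primitive Dirichlet character of modulus `R`: one induced by no character of
modulus of strictly smaller degree. -/
def IsPrimitiveChar (R : Polynomial Fq) (χ : Polynomial Fq → ℂ) : Prop :=
  IsDirichletChar R χ ∧
    ∀ S : Polynomial Fq, S.Monic → S ∣ R → S.natDegree < R.natDegree →
      ¬ ∃ χ₁ : Polynomial Fq → ℂ, IsDirichletChar S χ₁ ∧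
        ∀ A : Polynomial Fq, IsCoprime A R → χ A = χ₁ A

/-- An even character: trivial on the nonzero constants. -/
def IsEvenChar (χ : Polynomial Fq → ℂ) : Prop :=
  ∀ a : Fq, a ≠ 0 → χ (Polynomial.C a) = 1

/-- `φ*(R)`: the number of primitive characters of modulus `R`. -/
def numPrimChars (R : Polynomial Fq) : ℕ :=
  Set.ncard {χ : Polynomial Fq → ℂ | IsPrimitiveChar R χ}

/-- The Euler totient `φ(R) = #(𝔽_q[T]/(R))ˣ`. -/
def phiP (R : Polynomial Fq) : ℕ :=
  Nat.card ((Polynomial Fq ⧸ Ideal.span {R})ˣ)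

/-- `ω(A)`: the number of distinct monic prime divisors of `A`. -/
def omegaP (A : Polynomial Fq) : ℕ :=
  Set.ncard {P : Polynomial Fq | IsMonicPrime P ∧ P ∣ A}

open Classical in
/-- The Möbius function on monic polynomials. -/
def muP (A : Polynomial Fq) : ℤ :=
  if Squarefree A then (-1) ^ omegaP A else 0

/-- `d_k(A)`: the number of ways of writing `A` as an ordered product of `k` monic
polynomials. -/
def dk (k : ℕ) (A : Polynomial Fq) : ℕ :=
  Set.ncard {v : Fin k → Polynomial Fq | (∀ i, (v i).Monic) ∧ ∏ i, v i = A}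

/-- `A ∈ 𝒮_ℳ(X)`: `A` is monic and all its prime divisors have degree at most `X`. -/
def SmoothM (X : ℕ) (A : Polynomial Fq) : Prop :=
  A.Monic ∧ ∀ P : Polynomial Fq, IsMonicPrime P → P ∣ A → P.natDegree ≤ X

/-- The Dirichlet `L`-function of a non-trivial character `χ` of modulus `R`:
`L(s,χ) = ∑_{A monic, deg A < deg R} χ(A) |A|^{-s}`. -/
def Lfun (R : Polynomial Fq) (χ : Polynomial Fq → ℂ) (s : ℂ) : ℂ :=
  ∑ᶠ A ∈ {A : Polynomial Fq | A.Monic ∧ A.natDegree < R.natDegree},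
    χ A * (absP A : ℂ) ^ (-s)

open Classical in
/-- The von Mangoldt function: `Λ(A) = log |P|` if `A = P^j` (`P` monic prime, `j ≥ 1`),
and `0` otherwise. -/
def LambdaP (A : Polynomial Fq) : ℝ :=
  if h : ∃ P : Polynomial Fq, (P.Monic ∧ Irreducible P) ∧ ∃ j : ℕ, 1 ≤ j ∧ A = P ^ j
  then Real.log (absP h.choose) else 0

/-- The partial Euler product `P_X(s,χ)`. -/
def PX (X : ℕ) (χ : Polynomial Fq → ℂ) (s : ℂ) : ℂ :=
  Complex.exp (∑ᶠ A ∈ {A : Polynomial Fq | A.Monic ∧ A.natDegree ≤ X},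
    χ A * (LambdaP A : ℂ) / ((absP A : ℂ) ^ s * (Real.log (absP A) : ℂ)))

/-- The `L`-function of `χ` as a polynomial in the variable `w = q^{-s}`. -/
def LPoly (R : Polynomial Fq) (χ : Polynomial Fq → ℂ) : Polynomial ℂ :=
  ∑ n ∈ Finset.range R.natDegree,
    Polynomial.C (∑ᶠ A ∈ {A : Polynomial Fq | A.Monic ∧ A.natDegree = n}, χ A) *
      Polynomial.X ^ n

/-- The sum of `f` over the zeros of `L(s,χ)` counted with multiplicity, including
all the vertical `2π/log q`-periodic repetitions: the zeros are exactly the points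
`-log w / log q + 2πim/log q` for `w` a root (with multiplicity) of the `L`-polynomial
and `m ∈ ℤ`. -/
def zeroSum (R : Polynomial Fq) (χ : Polynomial Fq → ℂ) (f : ℂ → ℂ) : ℂ :=
  ((LPoly R χ).roots.map (fun w => ∑' m : ℤ,
    f (-Complex.log w / (Real.log (Fintype.card Fq) : ℂ) +
        2 * Real.pi * Complex.I * (m : ℂ) / (Real.log (Fintype.card Fq) : ℂ)))).sum

/-- The exponential integral `E₁(y) = ∫_{w=y}^{y+∞} e^{-w}/w dw`, along the horizontal
ray from `y` in the direction of `+1`. -/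
def E1 (y : ℂ) : ℂ :=
  ∫ t : ℝ in Set.Ioi (0 : ℝ), Complex.exp (-(y + (t : ℂ))) / (y + (t : ℂ))

/-- `U(z) = ∫_0^∞ u(x) E₁(z log x) dx`. -/
def Ufun (u : ℝ → ℝ) (z : ℂ) : ℂ :=
  ∫ x : ℝ in Set.Ioi (0 : ℝ), (u x : ℂ) * E1 (z * (Real.log x : ℂ))

/-- The Mellin transform `ũ(s) = ∫_0^∞ x^{s-1} u(x) dx`. -/
def mellinT (u : ℝ → ℝ) (s : ℂ) : ℂ :=
  ∫ x : ℝ in Set.Ioi (0 : ℝ), (x : ℂ) ^ (s - 1) * (u x : ℂ)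

/-- The arithmetic-factor constant `a(k)`. -/
def aConst (Fq : Type) [Field Fq] [Fintype Fq] (k : ℕ) : ℝ :=
  ∏' P : {P : Polynomial Fq // IsMonicPrime P},
    (1 - (absP P.1)⁻¹) ^ (k ^ 2) * ∑' m : ℕ, (dk k (P.1 ^ m) : ℝ) ^ 2 / absP (P.1 ^ m)

/-- The modified partial Euler product `P_X^*(s,χ)`. -/
def PXstar (X : ℕ) (χ : Polynomial Fq → ℂ) (s : ℂ) : ℂ :=
  (∏ᶠ P ∈ {P : Polynomial Fq | IsMonicPrime P ∧ P.natDegree ≤ X},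
      (1 - χ P / (absP P : ℂ) ^ s)⁻¹) *
    ∏ᶠ P ∈ {P : Polynomial Fq | IsMonicPrime P ∧ X < 2 * P.natDegree ∧ P.natDegree ≤ X},
      (1 + χ P ^ 2 / (2 * (absP P : ℂ) ^ (2 * s)))⁻¹

open Classical in
/-- The multiplicity of `P` in `A` (for `A ≠ 0`). -/
def multP (P A : Polynomial Fq) : ℕ :=
  if A = 0 then 0 else Nat.findGreatest (fun e => P ^ e ∣ A) A.natDegree

/-- Local coefficients of the Dirichlet series of `P_X^*(s,χ)^k`. -/
def locAlpha (k X : ℕ) (P : Polynomial Fq) (m : ℕ) : ℝ :=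
  if m = 0 then 1
  else if X < P.natDegree then 0
  else if 2 * P.natDegree ≤ X then (dk k (P ^ m) : ℝ)
  else ∑ j ∈ Finset.range (m / 2 + 1),
    (dk k (P ^ (m - 2 * j)) : ℝ) * (dk k (P ^ j) : ℝ) * (-(2 : ℝ)⁻¹) ^ j

/-- `α_k(A)`: the coefficients of the Dirichlet series `P_X^*(s,χ)^k = ∑ α_k(A)χ(A)|A|^{-s}`. -/
def alphaK (k X : ℕ) (A : Polynomial Fq) : ℝ :=
  ∏ᶠ P ∈ {P : Polynomial Fq | IsMonicPrime P ∧ P ∣ A}, locAlpha k X P (multP P A)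

/-- Local coefficients of the Dirichlet series of `P_X^*(s,χ)^{-1}`. -/
def locAlphaNeg (X : ℕ) (P : Polynomial Fq) (m : ℕ) : ℝ :=
  if m = 0 then 1
  else if X < P.natDegree then 0
  else if m = 1 then -1
  else if m = 2 then (if 2 * P.natDegree ≤ X then 0 else 2⁻¹)
  else if m = 3 then (if 2 * P.natDegree ≤ X then 0 else -2⁻¹)
  else 0

/-- The multiplicative function `α_{-1}`. -/
def alphaNeg (X : ℕ) (A : Polynomial Fq) : ℝ :=
  ∏ᶠ P ∈ {P : Polynomial Fq | IsMonicPrime P ∧ P ∣ A}, locAlphaNeg X P (multP P A)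

/-- The cosine integral `Ci(y) = -∫_y^∞ cos t / t dt`. -/
def Ci (y : ℝ) : ℝ := -∫ t : ℝ in Set.Ioi y, Real.cos t / t

open Classical in
/-- The greatest common monic divisor of two polynomials. -/
def gcdP (A B : Polynomial Fq) : Polynomial Fq :=
  Polynomial.C ((EuclideanDomain.gcd A B).leadingCoeff)⁻¹ * EuclideanDomain.gcd A B

/-- The decomposition shape of Lemma `A₁A₂A₃ = B₁B₂B₃`: all factors monic, the
coprimality conditions `gcd(V_{i,j}, V_{k,l}) = 1` for `i ≠ k` and `j ≠ l`, and the six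
product equations. -/
def Decomp3 (A1 A2 A3 B1 B2 B3 G1 G2 G3 V12 V13 V21 V23 V31 V32 : Polynomial Fq) : Prop :=
  G1.Monic ∧ G2.Monic ∧ G3.Monic ∧ V12.Monic ∧ V13.Monic ∧ V21.Monic ∧
    V23.Monic ∧ V31.Monic ∧ V32.Monic ∧
  IsCoprime V12 V21 ∧ IsCoprime V12 V23 ∧ IsCoprime V12 V31 ∧
  IsCoprime V13 V21 ∧ IsCoprime V13 V31 ∧ IsCoprime V13 V32 ∧
  IsCoprime V21 V32 ∧ IsCoprime V23 V31 ∧ IsCoprime V23 V32 ∧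
  A1 = G1 * V12 * V13 ∧ B1 = G1 * V21 * V31 ∧
  A2 = G2 * V21 * V23 ∧ B2 = G2 * V12 * V32 ∧
  A3 = G3 * V31 * V32 ∧ B3 = G3 * V13 * V23

section CountAux

open UniqueFactorizationMonoid

open Classical in
lemma dvd_gcdP_iff {Fq : Type} [Field Fq] [Fintype Fq]
    {A B : Polynomial Fq} (hA : A ≠ 0) (P : Polynomial Fq) :
    P ∣ gcdP A B ↔ P ∣ A ∧ P ∣ B := by
  have hg : EuclideanDomain.gcd A B ≠ 0 := by
    intro h
    have h0 : (0 : Polynomial Fq) ∣ A := h ▸ EuclideanDomain.gcd_dvd_left A B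
    exact hA (zero_dvd_iff.mp h0)
  have h1 : gcdP A B * Polynomial.C (EuclideanDomain.gcd A B).leadingCoeff =
      EuclideanDomain.gcd A B := by
    rw [gcdP, mul_right_comm, ← Polynomial.C_mul,
      inv_mul_cancel₀ (Polynomial.leadingCoeff_ne_zero.mpr hg), Polynomial.C_1, one_mul]
  have h2 : EuclideanDomain.gcd A B ∣ gcdP A B :=
    ⟨Polynomial.C (EuclideanDomain.gcd A B).leadingCoeff⁻¹, by
      rw [gcdP]
      exact mul_comm (Polynomial.C (EuclideanDomain.gcd A B).leadingCoeff⁻¹)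
        (EuclideanDomain.gcd A B)⟩
  constructor
  · intro h
    have h' : P ∣ EuclideanDomain.gcd A B := by
      rw [← h1]
      exact h.mul_right _
    exact ⟨h'.trans (EuclideanDomain.gcd_dvd_left A B),
      h'.trans (EuclideanDomain.gcd_dvd_right A B)⟩
  · intro h
    exact (EuclideanDomain.dvd_gcd h.1 h.2).trans h2

variable {Fq : Type} [Field Fq] [DecidableEq Fq]

lemma monic_of_mem_nf {W P : Polynomial Fq} (h : P ∈ normalizedFactors W) : P.Monic := by
  have h0 : P ≠ 0 := (irreducible_of_normalized_factor P h).ne_zero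
  have hn := normalize_normalized_factor P h
  rw [← hn]
  exact Polynomial.monic_normalize h0

lemma mem_nf_iff {W P : Polynomial Fq} (hW : W ≠ 0) :
    P ∈ normalizedFactors W ↔ (P.Monic ∧ Irreducible P) ∧ P ∣ W := by
  constructor
  · intro h
    exact ⟨⟨monic_of_mem_nf h, irreducible_of_normalized_factor P h⟩,
      dvd_of_mem_normalizedFactors h⟩
  · rintro ⟨⟨hm, hirr⟩, hdvd⟩
    obtain ⟨q, hq, hassoc⟩ := exists_mem_normalizedFactors_of_dvd hW hirr hdvd
    rwa [Polynomial.eq_of_monic_of_associated hm (monic_of_mem_nf hq) hassoc]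

lemma monic_eq_prod_nf {W : Polynomial Fq} (hW : W.Monic) :
    W = ∏ P ∈ (normalizedFactors W).toFinset, P ^ (normalizedFactors W).count P := by
  have h0 : W ≠ 0 := hW.ne_zero
  have h1 : Associated (normalizedFactors W).prod W := prod_normalizedFactors h0
  have h2 : (normalizedFactors W).prod.Monic := by
    rw [← Multiset.map_id (normalizedFactors W)]
    exact Polynomial.monic_multiset_prod_of_monic _ id fun P hP => monic_of_mem_nf hP
  calc W = (normalizedFactors W).prod :=
        (Polynomial.eq_of_monic_of_associated h2 hW h1).symm
    _ = _ := Finset.prod_multiset_count _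

lemma count_pairs {V D1 D2 : Polynomial Fq}
    (hV : V.Monic) (hD1 : D1 ≠ 0) (hD2 : D2 ≠ 0)
    (hdisj : ∀ P : Polynomial Fq, Irreducible P → P ∣ V → P ∣ D1 → P ∣ D2 → False) :
    Set.ncard {p : Polynomial Fq × Polynomial Fq |
        p.1.Monic ∧ p.2.Monic ∧ p.1 * p.2 = V ∧ IsCoprime p.1 D1 ∧
        IsCoprime p.2 D2 ∧ IsCoprime p.1 p.2} =
      2 ^ (omegaP V -
        Set.ncard {P : Polynomial Fq | IsMonicPrime P ∧ P ∣ V ∧ (P ∣ D1 ∨ P ∣ D2)}) := by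
  classical
  have hV0 : V ≠ 0 := hV.ne_zero
  set Ω : Finset (Polynomial Fq) := (normalizedFactors V).toFinset with hΩ
  set e : Polynomial Fq → ℕ := fun P => (normalizedFactors V).count P with he
  have hΩmem : ∀ P : Polynomial Fq, P ∈ Ω ↔ (P.Monic ∧ Irreducible P) ∧ P ∣ V := by
    intro P
    rw [hΩ, Multiset.mem_toFinset, mem_nf_iff hV0]
  have hmem : ∀ P ∈ Ω, P.Monic ∧ Irreducible P ∧ P ∣ V := by
    intro P hP
    rw [hΩmem] at hP
    exact ⟨hP.1.1, hP.1.2, hP.2⟩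
  have hprodV : ∏ P ∈ Ω, P ^ e P = V := (monic_eq_prod_nf hV).symm
  have hne_dvd : ∀ P ∈ Ω, ∀ Q ∈ Ω, P ≠ Q → ¬ P ∣ Q := by
    intro P hP Q hQ hne hdvd
    exact hne (Polynomial.eq_of_monic_of_associated (hmem P hP).1 (hmem Q hQ).1
      ((hmem P hP).2.1.associated_of_dvd (hmem Q hQ).2.1 hdvd))
  set ψ : Finset (Polynomial Fq) → Polynomial Fq × Polynomial Fq :=
    fun T => (∏ P ∈ T, P ^ e P, ∏ P ∈ Ω \ T, P ^ e P) with hψ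
  set 𝒯 : Finset (Finset (Polynomial Fq)) :=
    Ω.powerset.filter (fun T => (∀ P ∈ T, ¬ P ∣ D1) ∧ ∀ P ∈ Ω \ T, ¬ P ∣ D2) with h𝒯
  have hPdvd_prod : ∀ T : Finset (Polynomial Fq), T ⊆ Ω →
      ∀ P ∈ T, P ∣ ∏ Q ∈ T, Q ^ e Q := by
    intro T hT P hP
    have hc : e P ≠ 0 := by
      have h' := hT hP
      rw [hΩ, Multiset.mem_toFinset] at h'
      exact Multiset.count_ne_zero.mpr h'
    exact dvd_trans (dvd_pow_self P hc) (Finset.dvd_prod_of_mem _ hP)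
  have hdvd_mem : ∀ T : Finset (Polynomial Fq), T ⊆ Ω → ∀ P ∈ Ω,
      P ∣ ∏ Q ∈ T, Q ^ e Q → P ∈ T := by
    intro T hT P hPΩ hdvd
    have hprime : Prime P := (hmem P hPΩ).2.1.prime
    obtain ⟨Q, hQ, hPQ⟩ := hprime.exists_mem_finset_dvd hdvd
    have hPQ' : P ∣ Q := hprime.dvd_of_dvd_pow hPQ
    by_cases hPQe : P = Q
    · rwa [hPQe]
    · exact absurd hPQ' (hne_dvd P hPΩ Q (hT hQ) hPQe)
  have hmonicT : ∀ T : Finset (Polynomial Fq), T ⊆ Ω → (∏ P ∈ T, P ^ e P).Monic :=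
    fun T hT => Polynomial.monic_prod_of_monic _ _ fun P hP => ((hmem P (hT hP)).1).pow _
  have hcop_of : ∀ T : Finset (Polynomial Fq), T ⊆ Ω → ∀ W : Polynomial Fq,
      (∀ P ∈ T, ¬ P ∣ W) → IsCoprime (∏ P ∈ T, P ^ e P) W := by
    intro T hT W hW
    exact IsCoprime.prod_left fun P hP =>
      (((hmem P (hT hP)).2.1.isCoprime_or_dvd W).resolve_right (hW P hP)).pow_left
  have hcop_pair : ∀ T : Finset (Polynomial Fq), T ⊆ Ω →
      IsCoprime (∏ P ∈ T, P ^ e P) (∏ P ∈ Ω \ T, P ^ e P) := by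
    intro T hT
    refine IsCoprime.prod_left fun P hP => IsCoprime.prod_right fun Q hQ => ?_
    have hne : P ≠ Q := fun h => (Finset.mem_sdiff.mp hQ).2 (h ▸ hP)
    exact (((hmem P (hT hP)).2.1.isCoprime_or_dvd Q).resolve_right
      (hne_dvd P (hT hP) Q (Finset.mem_sdiff.mp hQ).1 hne)).pow
  have hψprod : ∀ T : Finset (Polynomial Fq), T ⊆ Ω →
      (∏ P ∈ T, P ^ e P) * (∏ P ∈ Ω \ T, P ^ e P) = V := by
    intro T hT
    rw [mul_comm, Finset.prod_sdiff hT]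
    exact hprodV
  have himage : {p : Polynomial Fq × Polynomial Fq |
        p.1.Monic ∧ p.2.Monic ∧ p.1 * p.2 = V ∧ IsCoprime p.1 D1 ∧
        IsCoprime p.2 D2 ∧ IsCoprime p.1 p.2} = ψ '' ↑𝒯 := by
    ext p
    simp only [Set.mem_image, Set.mem_setOf_eq, Finset.mem_coe, h𝒯,
      Finset.mem_filter, Finset.mem_powerset]
    constructor
    · rintro ⟨h1, h2, h3, h4, h5, h6⟩
      have hp1 : p.1 ≠ 0 := h1.ne_zero
      have hp2 : p.2 ≠ 0 := h2.ne_zero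
      have hTsub : Ω.filter (· ∣ p.1) ⊆ Ω := Finset.filter_subset _ _
      refine ⟨Ω.filter (· ∣ p.1), ⟨hTsub, ?_, ?_⟩, ?_⟩
      · intro P hP hPD1
        rw [Finset.mem_filter] at hP
        exact ((hmem P hP.1).2.1).not_isUnit (h4.isUnit_of_dvd' hP.2 hPD1)
      · intro P hP hPD2
        rw [Finset.mem_sdiff, Finset.mem_filter] at hP
        have hnp1 : ¬ P ∣ p.1 := fun h => hP.2 ⟨hP.1, h⟩
        have hprime : Prime P := (hmem P hP.1).2.1.prime
        have hPV : P ∣ p.1 * p.2 := by rw [h3]; exact (hmem P hP.1).2.2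
        have hPp2 : P ∣ p.2 := (hprime.dvd_mul.mp hPV).resolve_left hnp1
        exact hprime.not_isUnit (h5.isUnit_of_dvd' hPp2 hPD2)
      · -- ψ (Ω.filter (· ∣ p.1)) = p
        have hnfmul : normalizedFactors (p.1 * p.2) =
            normalizedFactors p.1 + normalizedFactors p.2 := normalizedFactors_mul hp1 hp2
        have hTfin : (normalizedFactors p.1).toFinset = Ω.filter (· ∣ p.1) := by
          ext P
          rw [Multiset.mem_toFinset, mem_nf_iff hp1, Finset.mem_filter, hΩmem]
          constructor
          · rintro ⟨hPmi, hPd⟩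
            exact ⟨⟨hPmi, hPd.trans ⟨p.2, h3.symm⟩⟩, hPd⟩
          · rintro ⟨⟨hPmi, _⟩, hPd⟩
            exact ⟨hPmi, hPd⟩
        have hcount : ∀ P ∈ (normalizedFactors p.1).toFinset,
            (normalizedFactors p.1).count P = e P := by
          intro P hP
          rw [Multiset.mem_toFinset] at hP
          have h2' : (normalizedFactors p.2).count P = 0 := by
            rw [Multiset.count_eq_zero]
            intro hmem2
            exact (irreducible_of_normalized_factor P hP).not_isUnit
              (h6.isUnit_of_dvd' (dvd_of_mem_normalizedFactors hP)
                (dvd_of_mem_normalizedFactors hmem2))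
          have hEP : e P = Multiset.count P (normalizedFactors (p.1 * p.2)) := by
            rw [h3, he]
          rw [hEP, hnfmul, Multiset.count_add, h2', add_zero]
        have hp1eq : (∏ P ∈ Ω.filter (· ∣ p.1), P ^ e P) = p.1 := by
          rw [← hTfin]
          conv_rhs => rw [monic_eq_prod_nf h1]
          exact Finset.prod_congr rfl fun P hP => by rw [hcount P hP]
        have hp2eq : (∏ P ∈ Ω \ Ω.filter (· ∣ p.1), P ^ e P) = p.2 := by
          have hh := hψprod _ hTsub
          rw [hp1eq, ← h3] at hh
          exact mul_left_cancel₀ hp1 hh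
        exact Prod.ext hp1eq hp2eq
    · rintro ⟨T, ⟨hTsub, hT1, hT2⟩, rfl⟩
      exact ⟨hmonicT T hTsub, hmonicT _ Finset.sdiff_subset, hψprod T hTsub,
        hcop_of T hTsub D1 hT1, hcop_of _ Finset.sdiff_subset D2 hT2, hcop_pair T hTsub⟩
  have hinj : Set.InjOn ψ ↑𝒯 := by
    intro T hT T' hT' heq
    rw [Finset.mem_coe, h𝒯, Finset.mem_filter, Finset.mem_powerset] at hT hT'
    have h1 : (∏ P ∈ T, P ^ e P) = ∏ P ∈ T', P ^ e P := congrArg Prod.fst heq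
    ext P
    constructor
    · intro hP
      refine hdvd_mem T' hT'.1 P (hT.1 hP) ?_
      rw [← h1]
      exact hPdvd_prod T hT.1 P hP
    · intro hP
      refine hdvd_mem T hT.1 P (hT'.1 hP) ?_
      rw [h1]
      exact hPdvd_prod T' hT'.1 P hP
  rw [himage, Set.ncard_image_of_injOn hinj, Set.ncard_coe_finset]
  -- now count 𝒯
  set F1 : Finset (Polynomial Fq) := Ω.filter (· ∣ D1) with hF1
  set F2 : Finset (Polynomial Fq) := Ω.filter (· ∣ D2) with hF2
  set U : Finset (Polynomial Fq) := (Ω \ F1) \ F2 with hU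
  have hF1Ω : F1 ⊆ Ω := Finset.filter_subset _ _
  have hF2Ω : F2 ⊆ Ω := Finset.filter_subset _ _
  have hdisj12 : Disjoint F1 F2 := by
    rw [Finset.disjoint_left]
    intro P hP1 hP2
    rw [hF1, Finset.mem_filter] at hP1
    rw [hF2, Finset.mem_filter] at hP2
    exact hdisj P (hmem P hP1.1).2.1 (hmem P hP1.1).2.2 hP1.2 hP2.2
  have h𝒯eq : 𝒯 = U.powerset.image (· ∪ F2) := by
    ext T
    simp only [h𝒯, Finset.mem_filter, Finset.mem_powerset, Finset.mem_image]
    constructor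
    · rintro ⟨hTΩ, hT1, hT2⟩
      refine ⟨T \ F2, ?_, ?_⟩
      · intro P hP
        rw [Finset.mem_sdiff] at hP
        rw [hU, Finset.mem_sdiff, Finset.mem_sdiff]
        refine ⟨⟨hTΩ hP.1, ?_⟩, hP.2⟩
        rw [hF1, Finset.mem_filter]
        rintro ⟨-, hd⟩
        exact hT1 P hP.1 hd
      · have hF2T : F2 ⊆ T := by
          intro P hP
          rw [hF2, Finset.mem_filter] at hP
          by_contra hPT
          exact hT2 P (Finset.mem_sdiff.mpr ⟨hP.1, hPT⟩) hP.2
        rw [Finset.sdiff_union_self_eq_union]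
        exact Finset.union_eq_left.mpr hF2T
    · rintro ⟨S, hSU, rfl⟩
      have hSfacts : ∀ P ∈ S, P ∈ Ω ∧ P ∉ F1 ∧ P ∉ F2 := by
        intro P hP
        have h' := hSU hP
        rw [hU, Finset.mem_sdiff, Finset.mem_sdiff] at h'
        exact ⟨h'.1.1, h'.1.2, h'.2⟩
      refine ⟨Finset.union_subset (fun P hP => (hSfacts P hP).1) hF2Ω, ?_, ?_⟩
      · intro P hP hPD1
        rcases Finset.mem_union.mp hP with h | h
        · exact (hSfacts P h).2.1 (by rw [hF1, Finset.mem_filter]; exact ⟨(hSfacts P h).1, hPD1⟩)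
        · exact Finset.disjoint_left.mp hdisj12
            (by rw [hF1, Finset.mem_filter]; exact ⟨hF2Ω h, hPD1⟩) h
      · intro P hP hPD2
        rw [Finset.mem_sdiff, Finset.mem_union] at hP
        exact hP.2 (Or.inr (by rw [hF2, Finset.mem_filter]; exact ⟨hP.1, hPD2⟩))
  have hUF2 : Disjoint U F2 := Finset.sdiff_disjoint
  have hkey : ∀ S S' : Finset (Polynomial Fq), Disjoint S F2 → S ∪ F2 = S' ∪ F2 → S ⊆ S' := by
    intro S S' hd h P hP
    have h' : P ∈ S' ∪ F2 := by rw [← h]; exact Finset.mem_union_left _ hP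
    exact (Finset.mem_union.mp h').resolve_right (Finset.disjoint_left.mp hd hP)
  have hcard𝒯 : 𝒯.card = 2 ^ U.card := by
    rw [h𝒯eq, Finset.card_image_of_injOn, Finset.card_powerset]
    intro S hS S' hS' hSS
    rw [Finset.mem_coe, Finset.mem_powerset] at hS hS'
    exact Finset.Subset.antisymm (hkey S S' (hUF2.mono_left hS) hSS)
      (hkey S' S (hUF2.mono_left hS') hSS.symm)
  have hF2sub : F2 ⊆ Ω \ F1 := by
    intro P hP
    rw [Finset.mem_sdiff]
    exact ⟨hF2Ω hP, fun h => Finset.disjoint_left.mp hdisj12 h hP⟩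
  have hUcard : U.card = Ω.card - F1.card - F2.card := by
    rw [hU, Finset.card_sdiff_of_subset hF2sub, Finset.card_sdiff_of_subset hF1Ω]
  have hsetΩ : {P : Polynomial Fq | IsMonicPrime P ∧ P ∣ V} = ↑Ω := by
    ext P
    rw [Finset.mem_coe, hΩmem]
    simp only [Set.mem_setOf_eq, IsMonicPrime]
  have hsetF : {P : Polynomial Fq | IsMonicPrime P ∧ P ∣ V ∧ (P ∣ D1 ∨ P ∣ D2)} = ↑(F1 ∪ F2) := by
    ext P
    simp only [Set.mem_setOf_eq, IsMonicPrime, Finset.coe_union, Set.mem_union, Finset.mem_coe,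
      hF1, hF2, Finset.mem_filter, hΩmem]
    tauto
  have hωV : omegaP V = Ω.card := by
    rw [omegaP, hsetΩ, Set.ncard_coe_finset]
  rw [hcard𝒯, hωV, hsetF, Set.ncard_coe_finset,
    Finset.card_union_of_disjoint hdisj12, hUcard, Nat.sub_sub]

end CountAux

/-- **Counting coprime factorizations with coprimality constraints.** The set of pairs
`(V₁₂, V₂₁)` decomposes according to the product `V = V₁₂V₂₁`, which is necessarily
coprime to `gcd(V₁₃V₃₁, V₂₃V₃₂)`, and for each admissible `V` the number of such pairs
is `2^{ω(V) - ω(gcd(V, V₁₃V₂₃V₃₁V₃₂))}`. -/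
theorem coprime_factorization_count
    (Fq : Type) [Field Fq] [Fintype Fq]
    (V13 V23 V31 V32 : Polynomial Fq)
    (h13 : V13.Monic) (h23 : V23.Monic) (h31 : V31.Monic) (h32 : V32.Monic)
    (hc1 : IsCoprime V13 (V31 * V32)) (hc2 : IsCoprime V23 (V31 * V32)) :
    ({p : Polynomial Fq × Polynomial Fq |
        p.1.Monic ∧ p.2.Monic ∧ IsCoprime p.1 (V23 * V31) ∧
        IsCoprime p.2 (V13 * V32) ∧ IsCoprime p.1 p.2} =
      ⋃ V ∈ {V : Polynomial Fq | V.Monic ∧ IsCoprime V (gcdP (V13 * V31) (V23 * V32))},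
        {p : Polynomial Fq × Polynomial Fq |
          p.1.Monic ∧ p.2.Monic ∧ p.1 * p.2 = V ∧ IsCoprime p.1 (V23 * V31) ∧
          IsCoprime p.2 (V13 * V32) ∧ IsCoprime p.1 p.2}) ∧
    ∀ V : Polynomial Fq, V.Monic → IsCoprime V (gcdP (V13 * V31) (V23 * V32)) →
      Set.ncard {p : Polynomial Fq × Polynomial Fq |
          p.1.Monic ∧ p.2.Monic ∧ p.1 * p.2 = V ∧ IsCoprime p.1 (V23 * V31) ∧
          IsCoprime p.2 (V13 * V32) ∧ IsCoprime p.1 p.2} =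
        2 ^ (omegaP V - omegaP (gcdP V (V13 * V23 * V31 * V32))) := by
  classical
  have h1331 : V13 * V31 ≠ 0 := mul_ne_zero h13.ne_zero h31.ne_zero
  constructor
  · ext p
    simp only [Set.mem_setOf_eq, Set.mem_iUnion, exists_prop]
    constructor
    · rintro ⟨h1, h2, h3, h4, h5⟩
      have hg1 : IsCoprime p.1 (gcdP (V13 * V31) (V23 * V32)) := by
        apply isCoprime_of_irreducible_dvd (fun hc => h1.ne_zero hc.1)
        intro z hz hzp hzG
        obtain ⟨hz1, hz2⟩ := (dvd_gcdP_iff h1331 z).mp hzG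
        have hzprime := hz.prime
        have hz23 : ¬ z ∣ V23 := fun h => hz.not_isUnit (h3.isUnit_of_dvd' hzp (h.mul_right V31))
        have hz31 : ¬ z ∣ V31 := fun h => hz.not_isUnit (h3.isUnit_of_dvd' hzp (h.mul_left V23))
        have hz32 : z ∣ V32 := (hzprime.dvd_mul.mp hz2).resolve_left hz23
        have hz13 : z ∣ V13 := (hzprime.dvd_mul.mp hz1).resolve_right hz31
        exact hz.not_isUnit (hc1.isUnit_of_dvd' hz13 (hz32.mul_left V31))
      have hg2 : IsCoprime p.2 (gcdP (V13 * V31) (V23 * V32)) := by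
        apply isCoprime_of_irreducible_dvd (fun hc => h2.ne_zero hc.1)
        intro z hz hzp hzG
        obtain ⟨hz1, hz2⟩ := (dvd_gcdP_iff h1331 z).mp hzG
        have hzprime := hz.prime
        have hz13 : ¬ z ∣ V13 := fun h => hz.not_isUnit (h4.isUnit_of_dvd' hzp (h.mul_right V32))
        have hz32 : ¬ z ∣ V32 := fun h => hz.not_isUnit (h4.isUnit_of_dvd' hzp (h.mul_left V13))
        have hz31 : z ∣ V31 := (hzprime.dvd_mul.mp hz1).resolve_left hz13
        have hz23 : z ∣ V23 := (hzprime.dvd_mul.mp hz2).resolve_right hz32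
        exact hz.not_isUnit (hc2.isUnit_of_dvd' hz23 (hz31.mul_right V32))
      exact ⟨p.1 * p.2, ⟨h1.mul h2, hg1.mul_left hg2⟩, h1, h2, rfl, h3, h4, h5⟩
    · rintro ⟨V, ⟨hVm, hVc⟩, h1, h2, h3, h4, h5, h6⟩
      exact ⟨h1, h2, h4, h5, h6⟩
  · intro V hVm hVc
    have hV0 : V ≠ 0 := hVm.ne_zero
    have hdisj : ∀ P : Polynomial Fq, Irreducible P → P ∣ V →
        P ∣ (V23 * V31) → P ∣ (V13 * V32) → False := by
      intro P hP hPV hA hB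
      have hprime := hP.prime
      rcases hprime.dvd_mul.mp hA with hd23 | hd31 <;> rcases hprime.dvd_mul.mp hB with hd13 | hd32
      · exact hP.not_isUnit (hVc.isUnit_of_dvd' hPV ((dvd_gcdP_iff h1331 P).mpr
          ⟨hd13.mul_right V31, hd23.mul_right V32⟩))
      · exact hP.not_isUnit (hc2.isUnit_of_dvd' hd23 (hd32.mul_left V31))
      · exact hP.not_isUnit (hc1.isUnit_of_dvd' hd13 (hd31.mul_right V32))
      · exact hP.not_isUnit (hVc.isUnit_of_dvd' hPV ((dvd_gcdP_iff h1331 P).mpr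
          ⟨hd31.mul_left V13, hd32.mul_left V23⟩))
    have hωg : omegaP (gcdP V (V13 * V23 * V31 * V32)) =
        Set.ncard {P : Polynomial Fq | IsMonicPrime P ∧ P ∣ V ∧
          (P ∣ (V23 * V31) ∨ P ∣ (V13 * V32))} := by
      rw [omegaP]
      congr 1
      ext P
      simp only [Set.mem_setOf_eq]
      constructor
      · rintro ⟨hPmi, hPd⟩
        have hPmi' : P.Monic ∧ Irreducible P := hPmi
        have h' := (dvd_gcdP_iff hV0 P).mp hPd
        refine ⟨hPmi, h'.1, ?_⟩
        have hD : P ∣ (V23 * V31) * (V13 * V32) := by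
          have hre : (V23 * V31) * (V13 * V32) = V13 * V23 * V31 * V32 := by ring
          rw [hre]
          exact h'.2
        exact hPmi'.2.prime.dvd_mul.mp hD
      · rintro ⟨hPmi, hPV, hPD⟩
        refine ⟨hPmi, (dvd_gcdP_iff hV0 P).mpr ⟨hPV, ?_⟩⟩
        have hre : V13 * V23 * V31 * V32 = (V23 * V31) * (V13 * V32) := by ring
        rw [hre]
        rcases hPD with h | h
        · exact h.mul_right _
        · exact h.mul_left _
    rw [hωg]
    exact count_pairs hVm (mul_ne_zero h23.ne_zero h31.ne_zero)
      (mul_ne_zero h13.ne_zero h32.ne_zero) hdisj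

end FFEH
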